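/- Let ρ(t,x) = (4πt)^{−1/2} exp(−x²/(4t)), let γ ∈ (0,1], and let σ: [0,∞) × ℝ → ℝ be bounded and jointly Hölder continuous of order γ, i.e. |σ(t₁,x₁) − σ(t₂,x₂)| ≤ L(|t₁ − t₂|^γ + |x₁ − x₂|^γ). Fix t > 0 and x ∈ ℝ and define f(s) = ∫_ℝ ρ(t − s, x − y) σ(s, y) dy for s ∈ [0,t). Then there is a constant C depending only on L, γ, and t such that for all 0 ≤ u < s < t, |f(s) − f(u)| ≤ C (t − u)^{−γ/2} (s − u)^γ. -/

import Mathlib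

open MeasureTheory Set

/-- The Gaussian heat kernel `ρ(t,x) = (4πt)^{-1/2} exp(-x²/(4t))`. -/
noncomputable def heatKernel (t x : ℝ) : ℝ :=
  (4 * Real.pi * t) ^ (-(1:ℝ)/2) * Real.exp (-(x ^ 2) / (4 * t))

namespace HeatProofAux

lemma hk_pos {τ : ℝ} (hτ : 0 < τ) (z : ℝ) : 0 < heatKernel τ z := by
  unfold heatKernel
  have : (0:ℝ) < 4 * Real.pi * τ := by positivity
  positivity

lemma hk_continuous {τ : ℝ} : Continuous (heatKernel τ) := by
  unfold heatKernel
  fun_prop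

/-- centered moment constant -/
noncomputable def mom (α : ℝ) : ℝ := ∫ w : ℝ, |w| ^ α * Real.exp (-(w ^ 2) / 4)

lemma mom_nonneg (α : ℝ) : 0 ≤ mom α := by
  apply integral_nonneg; intro w; positivity

lemma integrable_abs_rpow_mul_exp {b α : ℝ} (hb : 0 < b) (hα : 0 ≤ α) (hα4 : α ≤ 4) :
    Integrable fun z : ℝ => |z| ^ α * Real.exp (-b * z ^ 2) := by
  have h4 : Integrable fun z : ℝ => (1 + z ^ 4) * Real.exp (-b * z ^ 2) := by
    have h1 := integrable_rpow_mul_exp_neg_mul_sq hb (s := 4) (by norm_num)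
    have h2 : Integrable fun z : ℝ => z ^ (4:ℕ) * Real.exp (-b * z ^ 2) := by
      have he : ∀ z : ℝ, z ^ ((4:ℕ):ℝ) = z ^ (4:ℕ) := fun z => Real.rpow_natCast z 4
      have : (fun z : ℝ => z ^ (4:ℝ) * Real.exp (-b * z ^ 2))
          = fun z : ℝ => z ^ (4:ℕ) * Real.exp (-b * z ^ 2) := by
        funext z; rw [show (4:ℝ) = ((4:ℕ):ℝ) by norm_num, he]
      rw [← this]; exact h1
    have h0 := integrable_exp_neg_mul_sq hb
    exact (h0.add h2).congr (Filter.Eventually.of_forall fun z => by simp only [Pi.add_apply]; ring)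
  refine h4.mono' ?_ ?_
  · apply Continuous.aestronglyMeasurable
    exact (continuous_abs.rpow_const (fun _ => Or.inr hα)).mul (by fun_prop)
  · filter_upwards with z
    have he : (0:ℝ) < Real.exp (-b * z ^ 2) := Real.exp_pos _
    have hpow : |z| ^ α ≤ 1 + z ^ 4 := by
      rcases le_total |z| 1 with h | h
      · have := Real.rpow_le_one (abs_nonneg z) h hα
        nlinarith [pow_nonneg (abs_nonneg z) 4, sq_nonneg (z^2)]
      · have h1 : |z| ^ α ≤ |z| ^ (4:ℝ) :=
          Real.rpow_le_rpow_of_exponent_le h hα4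
        have h2 : |z| ^ (4:ℝ) = z ^ 4 := by
          rw [show (4:ℝ) = ((4:ℕ):ℝ) by norm_num, Real.rpow_natCast]
          simp [pow_abs, abs_of_nonneg (by positivity : (0:ℝ) ≤ z^4)]
        nlinarith [h1, h2]
    have : ‖|z| ^ α * Real.exp (-b * z ^ 2)‖ = |z| ^ α * Real.exp (-b * z ^ 2) := by
      rw [norm_mul, Real.norm_eq_abs, Real.norm_eq_abs, abs_of_nonneg (by positivity),
        abs_of_nonneg he.le]
    rw [this]
    exact mul_le_mul_of_nonneg_right hpow he.le

lemma moment_scale {τ α : ℝ} (hτ : 0 < τ) :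
    (∫ z : ℝ, |z| ^ α * Real.exp (-(z ^ 2) / (4 * τ)))
      = τ ^ ((α + 1) / 2) * mom α := by
  set r : ℝ := Real.sqrt τ with hr
  have hr0 : 0 < r := Real.sqrt_pos.2 hτ
  have hr2 : r ^ 2 = τ := Real.sq_sqrt hτ.le
  set g : ℝ → ℝ := fun w => |w| ^ α * Real.exp (-(w ^ 2) / 4) with hg
  have key : ∀ z : ℝ, |z| ^ α * Real.exp (-(z ^ 2) / (4 * τ)) = r ^ α * g (r⁻¹ * z) := by
    intro z
    have h1 : |r⁻¹ * z| ^ α = (r⁻¹) ^ α * |z| ^ α := by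
      rw [abs_mul, Real.mul_rpow (abs_nonneg _) (abs_nonneg _),
        abs_of_nonneg (by positivity : (0:ℝ) ≤ r⁻¹)]
    have h2 : -((r⁻¹ * z) ^ 2) / 4 = -(z ^ 2) / (4 * τ) := by
      rw [mul_pow, ← hr2]
      field_simp
    have h3 : r ^ α * (r⁻¹) ^ α = 1 := by
      rw [← Real.mul_rpow hr0.le (by positivity), mul_inv_cancel₀ hr0.ne',
        Real.one_rpow]
    simp only [hg, h1, h2]
    rw [← mul_assoc, ← mul_assoc, h3, one_mul]
  simp only [key]
  rw [integral_const_mul, MeasureTheory.Measure.integral_comp_inv_mul_left g r]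
  rw [abs_of_nonneg hr0.le, smul_eq_mul, ← mul_assoc]
  have h4 : r = τ ^ ((1:ℝ)/2) := by rw [hr, Real.sqrt_eq_rpow]
  unfold mom
  congr 1
  rw [h4, ← Real.rpow_mul hτ.le, ← Real.rpow_add hτ]
  ring_nf

lemma exp_arg_eq (τ : ℝ) (hτ : 0 < τ) (z : ℝ) :
    -(z ^ 2) / (4 * τ) = -((4 * τ)⁻¹) * z ^ 2 := by field_simp

lemma integrable_exp_quarter {τ : ℝ} (hτ : 0 < τ) :
    Integrable fun z : ℝ => Real.exp (-(z ^ 2) / (4 * τ)) := by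
  simp_rw [exp_arg_eq τ hτ]
  exact integrable_exp_neg_mul_sq (by positivity)

lemma integrable_hk {τ : ℝ} (hτ : 0 < τ) : Integrable (heatKernel τ) := by
  unfold heatKernel
  exact (integrable_exp_quarter hτ).const_mul _

lemma integral_exp_quarter {τ : ℝ} (hτ : 0 < τ) :
    (∫ z : ℝ, Real.exp (-(z ^ 2) / (4 * τ))) = Real.sqrt (4 * Real.pi * τ) := by
  simp_rw [exp_arg_eq τ hτ]
  rw [integral_gaussian]
  congr 1
  field_simp

lemma integral_hk {τ : ℝ} (hτ : 0 < τ) : (∫ z : ℝ, heatKernel τ z) = 1 := by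
  unfold heatKernel
  rw [integral_const_mul, integral_exp_quarter hτ, Real.sqrt_eq_rpow,
    ← Real.rpow_add (by positivity : (0:ℝ) < 4 * Real.pi * τ)]
  norm_num

lemma integral_hk_sub {τ : ℝ} (hτ : 0 < τ) (x : ℝ) :
    (∫ y : ℝ, heatKernel τ (x - y)) = 1 := by
  rw [integral_sub_left_eq_self (heatKernel τ) volume x]
  exact integral_hk hτ

lemma integrable_moment {τ α : ℝ} (hτ : 0 < τ) (hα : 0 ≤ α) (hα4 : α ≤ 4) :
    Integrable fun z : ℝ => |z| ^ α * Real.exp (-(z ^ 2) / (4 * τ)) := by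
  simp_rw [exp_arg_eq τ hτ]
  exact integrable_abs_rpow_mul_exp (by positivity) hα hα4

lemma integrable_hk_moment {τ α : ℝ} (hτ : 0 < τ) (hα : 0 ≤ α) (hα4 : α ≤ 4) :
    Integrable fun z : ℝ => heatKernel τ z * |z| ^ α := by
  unfold heatKernel
  have : ∀ z : ℝ, (4 * Real.pi * τ) ^ (-(1:ℝ)/2) * Real.exp (-(z ^ 2) / (4 * τ)) * |z| ^ α
      = (4 * Real.pi * τ) ^ (-(1:ℝ)/2) * (|z| ^ α * Real.exp (-(z ^ 2) / (4 * τ))) := by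
    intro z; ring
  simp_rw [this]
  exact (integrable_moment hτ hα hα4).const_mul _

lemma integral_hk_moment {τ α : ℝ} (hτ : 0 < τ) :
    (∫ z : ℝ, heatKernel τ z * |z| ^ α)
      = (4 * Real.pi) ^ (-(1:ℝ)/2) * τ ^ (α / 2) * mom α := by
  unfold heatKernel
  have : ∀ z : ℝ, (4 * Real.pi * τ) ^ (-(1:ℝ)/2) * Real.exp (-(z ^ 2) / (4 * τ)) * |z| ^ α
      = (4 * Real.pi * τ) ^ (-(1:ℝ)/2) * (|z| ^ α * Real.exp (-(z ^ 2) / (4 * τ))) := by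
    intro z; ring
  simp_rw [this]
  rw [integral_const_mul, moment_scale hτ,
    Real.mul_rpow (by positivity : (0:ℝ) ≤ 4 * Real.pi) hτ.le, mul_assoc, mul_assoc]
  congr 1
  rw [← mul_assoc, ← Real.rpow_add hτ]
  congr 2
  ring

/-- time derivative of the heat kernel -/
noncomputable def dK (τ z : ℝ) : ℝ :=
  (-(1:ℝ)/2) * (4 * Real.pi * τ) ^ (-(1:ℝ)/2 - 1) * (4 * Real.pi) * Real.exp (-(z ^ 2) / (4 * τ))
    + (4 * Real.pi * τ) ^ (-(1:ℝ)/2) * (Real.exp (-(z ^ 2) / (4 * τ)) * (z ^ 2 / (4 * τ ^ 2)))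

lemma hasDerivAt_hk {τ : ℝ} (hτ : 0 < τ) (z : ℝ) :
    HasDerivAt (fun τ' => heatKernel τ' z) (dK τ z) τ := by
  have hbase : (4 * Real.pi * τ) ≠ 0 := by positivity
  have h1 : HasDerivAt (fun τ' : ℝ => (4 * Real.pi * τ') ^ (-(1:ℝ)/2))
      ((-(1:ℝ)/2) * (4 * Real.pi * τ) ^ (-(1:ℝ)/2 - 1) * (4 * Real.pi)) τ := by
    have hin : HasDerivAt (fun τ' : ℝ => 4 * Real.pi * τ') (4 * Real.pi) τ := by
      simpa using (hasDerivAt_id τ).const_mul (4 * Real.pi)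
    exact (Real.hasDerivAt_rpow_const (Or.inl hbase)).comp τ hin
  have h2 : HasDerivAt (fun τ' : ℝ => Real.exp (-(z ^ 2) / (4 * τ')))
      (Real.exp (-(z ^ 2) / (4 * τ)) * (z ^ 2 / (4 * τ ^ 2))) τ := by
    have hin : HasDerivAt (fun τ' : ℝ => -(z ^ 2) / (4 * τ')) (z ^ 2 / (4 * τ ^ 2)) τ := by
      have h3 : HasDerivAt (fun τ' : ℝ => (τ' : ℝ)⁻¹) (-(τ ^ 2)⁻¹) τ := by
        simpa using hasDerivAt_inv hτ.ne'
      have h5 : HasDerivAt (fun τ' : ℝ => (-(z ^ 2) / 4) * τ'⁻¹)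
          ((-(z ^ 2) / 4) * -(τ ^ 2)⁻¹) τ := h3.const_mul _
      have hfun : (fun τ' : ℝ => (-(z ^ 2) / 4) * τ'⁻¹) = fun τ' : ℝ => -(z ^ 2) / (4 * τ') := by
        funext τ'
        rcases eq_or_ne τ' 0 with h | h
        · simp [h]
        · field_simp
      have hval : (-(z ^ 2) / 4) * -(τ ^ 2)⁻¹ = z ^ 2 / (4 * τ ^ 2) := by
        field_simp
      rw [hfun, hval] at h5
      exact h5
    exact hin.exp
  exact h1.mul h2

lemma dK_eq {τ : ℝ} (hτ : 0 < τ) (z : ℝ) :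
    dK τ z = heatKernel τ z * (z ^ 2 / (4 * τ ^ 2) - 1 / (2 * τ)) := by
  have hpos : (0:ℝ) < 4 * Real.pi * τ := by positivity
  unfold dK heatKernel
  rw [show (-(1:ℝ)/2 - 1) = (-(1:ℝ)/2) + (-1) by ring, Real.rpow_add hpos,
    Real.rpow_neg_one]
  have hπ : Real.pi ≠ 0 := Real.pi_ne_zero
  field_simp
  ring

lemma abs_dK_le {τ : ℝ} (hτ : 0 < τ) (z : ℝ) :
    |dK τ z| ≤ heatKernel τ z * (1 / (2 * τ) + z ^ 2 / (4 * τ ^ 2)) := by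
  rw [dK_eq hτ z, abs_mul, abs_of_nonneg (hk_pos hτ z).le]
  apply mul_le_mul_of_nonneg_left _ (hk_pos hτ z).le
  have h1 : |z ^ 2 / (4 * τ ^ 2) - 1 / (2 * τ)| ≤ |z ^ 2 / (4 * τ ^ 2)| + |1 / (2 * τ)| :=
    abs_sub _ _
  have h2 : |z ^ 2 / (4 * τ ^ 2)| = z ^ 2 / (4 * τ ^ 2) := abs_of_nonneg (by positivity)
  have h3 : |1 / (2 * τ)| = 1 / (2 * τ) := abs_of_nonneg (by positivity)
  rw [h2, h3] at h1
  linarith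

lemma hk_diff_le {τ₁ τ₂ : ℝ} (h1 : 0 < τ₁) (h12 : τ₁ ≤ τ₂) (z : ℝ) :
    |heatKernel τ₂ z - heatKernel τ₁ z| ≤ (τ₂ - τ₁) *
      ((4 * Real.pi * τ₁) ^ (-(1:ℝ)/2) * Real.exp (-(z ^ 2) / (4 * τ₂))
        * (1 / (2 * τ₁) + z ^ 2 / (4 * τ₁ ^ 2))) := by
  set C : ℝ := (4 * Real.pi * τ₁) ^ (-(1:ℝ)/2) * Real.exp (-(z ^ 2) / (4 * τ₂))
        * (1 / (2 * τ₁) + z ^ 2 / (4 * τ₁ ^ 2)) with hC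
  have bound : ∀ τ ∈ Icc τ₁ τ₂, ‖dK τ z‖ ≤ C := by
    intro τ hτmem
    obtain ⟨ha, hb⟩ := hτmem
    have hτ : 0 < τ := lt_of_lt_of_le h1 ha
    refine le_trans (abs_dK_le hτ z) ?_
    have hker : heatKernel τ z
        ≤ (4 * Real.pi * τ₁) ^ (-(1:ℝ)/2) * Real.exp (-(z ^ 2) / (4 * τ₂)) := by
      unfold heatKernel
      have e1 : (4 * Real.pi * τ) ^ (-(1:ℝ)/2) ≤ (4 * Real.pi * τ₁) ^ (-(1:ℝ)/2) := by
        apply Real.rpow_le_rpow_of_nonpos (by positivity)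
        · nlinarith [Real.pi_pos]
        · norm_num
      have e2 : Real.exp (-(z ^ 2) / (4 * τ)) ≤ Real.exp (-(z ^ 2) / (4 * τ₂)) := by
        apply Real.exp_le_exp.2
        rw [neg_div, neg_div, neg_le_neg_iff]
        apply div_le_div_of_nonneg_left (by positivity) (by positivity)
        linarith
      exact mul_le_mul e1 e2 (Real.exp_pos _).le (by positivity)
    have hfac : 1 / (2 * τ) + z ^ 2 / (4 * τ ^ 2)
        ≤ 1 / (2 * τ₁) + z ^ 2 / (4 * τ₁ ^ 2) := by
      have e3 : 1 / (2 * τ) ≤ 1 / (2 * τ₁) := by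
        apply div_le_div_of_nonneg_left (by norm_num) (by positivity); linarith
      have e4 : z ^ 2 / (4 * τ ^ 2) ≤ z ^ 2 / (4 * τ₁ ^ 2) := by
        apply div_le_div_of_nonneg_left (by positivity) (by positivity)
        nlinarith
      linarith
    rw [hC]
    have hne : (0:ℝ) < 4 * Real.pi * τ₁ := by positivity
    refine mul_le_mul hker hfac (by positivity) ?_
    positivity
  have hmvt := Convex.norm_image_sub_le_of_norm_hasDerivWithin_le
    (f := fun τ' => heatKernel τ' z) (f' := fun τ' => dK τ' z) (s := Icc τ₁ τ₂)
    (fun τ hτmem => (hasDerivAt_hk (lt_of_lt_of_le h1 hτmem.1) z).hasDerivWithinAt)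
    bound (convex_Icc τ₁ τ₂) (left_mem_Icc.2 h12) (right_mem_Icc.2 h12)
  rw [Real.norm_eq_abs, Real.norm_eq_abs, abs_of_nonneg (by linarith : (0:ℝ) ≤ τ₂ - τ₁)] at hmvt
  calc |heatKernel τ₂ z - heatKernel τ₁ z| ≤ C * (τ₂ - τ₁) := hmvt
    _ = (τ₂ - τ₁) * C := mul_comm _ _

lemma abs_rpow_add_two (γ : ℝ) (hγ : 0 < γ) (z : ℝ) :
    |z| ^ (γ + 2) = |z| ^ γ * z ^ 2 := by
  rw [Real.rpow_add' (abs_nonneg z) (by positivity)]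
  congr 1
  rw [show (2:ℝ) = ((2:ℕ):ℝ) by norm_num, Real.rpow_natCast, sq_abs]

set_option maxHeartbeats 1000000 in
theorem kernel_diff_moment {τ₁ τ₂ γ : ℝ} (h1 : 0 < τ₁) (h12 : τ₁ < τ₂)
    (hγ0 : 0 < γ) (hγ1 : γ ≤ 1) :
    (∫ z : ℝ, |heatKernel τ₁ z - heatKernel τ₂ z| * |z| ^ γ)
      ≤ (4 * (4 * Real.pi) ^ (-(1:ℝ)/2) * mom γ + (mom γ + mom (γ + 2)))
        * (τ₂ ^ (-(γ / 2)) * (τ₂ - τ₁) ^ γ) := by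
  have h2 : 0 < τ₂ := lt_trans h1 h12
  obtain ⟨δ, hδdef⟩ : ∃ δ : ℝ, δ = τ₂ - τ₁ := ⟨_, rfl⟩
  rw [← hδdef]
  have hδ : 0 < δ := by rw [hδdef]; linarith
  have hδτ : δ ≤ τ₂ := by rw [hδdef]; linarith
  have hP : (0:ℝ) < τ₂ ^ (-(γ / 2)) := Real.rpow_pos_of_pos h2 _
  have hD : (0:ℝ) < δ ^ γ := Real.rpow_pos_of_pos hδ _
  have hγ4 : γ ≤ 4 := by linarith
  have hmomγ := mom_nonneg γ
  have hmomγ2 := mom_nonneg (γ + 2)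
  have h4π : (0:ℝ) < (4 * Real.pi) ^ (-(1:ℝ)/2) := Real.rpow_pos_of_pos (by positivity) _
  have hkey : τ₂ ^ (γ / 2) = τ₂ ^ γ * τ₂ ^ (-(γ / 2)) := by
    rw [← Real.rpow_add h2]; congr 1; ring
  rcases le_or_gt τ₂ (2 * δ) with hcase | hcase
  · -- case a : τ₂ ≤ 2δ, crude bound
    have hle : (∫ z : ℝ, |heatKernel τ₁ z - heatKernel τ₂ z| * |z| ^ γ)
        ≤ ∫ z : ℝ, (heatKernel τ₁ z * |z| ^ γ + heatKernel τ₂ z * |z| ^ γ) := by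
      apply integral_mono_of_nonneg
      · filter_upwards with z; positivity
      · exact (integrable_hk_moment h1 hγ0.le hγ4).add (integrable_hk_moment h2 hγ0.le hγ4)
      · filter_upwards with z
        have := abs_sub (heatKernel τ₁ z) (heatKernel τ₂ z)
        have e1 : |heatKernel τ₁ z| = heatKernel τ₁ z := abs_of_nonneg (hk_pos h1 z).le
        have e2 : |heatKernel τ₂ z| = heatKernel τ₂ z := abs_of_nonneg (hk_pos h2 z).le
        have hz : (0:ℝ) ≤ |z| ^ γ := by positivity
        have h' : |heatKernel τ₁ z - heatKernel τ₂ z| ≤ heatKernel τ₁ z + heatKernel τ₂ z := by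
          rw [e1, e2] at this; exact this
        calc |heatKernel τ₁ z - heatKernel τ₂ z| * |z| ^ γ
            ≤ (heatKernel τ₁ z + heatKernel τ₂ z) * |z| ^ γ :=
              mul_le_mul_of_nonneg_right h' hz
          _ = heatKernel τ₁ z * |z| ^ γ + heatKernel τ₂ z * |z| ^ γ := by ring
    rw [integral_add (integrable_hk_moment h1 hγ0.le hγ4)
      (integrable_hk_moment h2 hγ0.le hγ4), integral_hk_moment h1, integral_hk_moment h2] at hle
    have hm1 : τ₁ ^ (γ / 2) ≤ τ₂ ^ (γ / 2) :=
      Real.rpow_le_rpow h1.le h12.le (by positivity)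
    have hm2 : τ₂ ^ (γ / 2) ≤ 2 * (δ ^ γ * τ₂ ^ (-(γ / 2))) := by
      rw [hkey]
      have e1 : τ₂ ^ γ ≤ (2 * δ) ^ γ := Real.rpow_le_rpow h2.le hcase hγ0.le
      have e2 : (2 * δ) ^ γ = 2 ^ γ * δ ^ γ := Real.mul_rpow (by norm_num) hδ.le
      have e3 : (2:ℝ) ^ γ ≤ 2 := by
        calc (2:ℝ) ^ γ ≤ (2:ℝ) ^ (1:ℝ) := Real.rpow_le_rpow_of_exponent_le one_le_two hγ1
          _ = 2 := Real.rpow_one 2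
      have : τ₂ ^ γ ≤ 2 * δ ^ γ := by
        calc τ₂ ^ γ ≤ 2 ^ γ * δ ^ γ := by rw [← e2]; exact e1
          _ ≤ 2 * δ ^ γ := mul_le_mul_of_nonneg_right e3 hD.le
      nlinarith
    calc (∫ z : ℝ, |heatKernel τ₁ z - heatKernel τ₂ z| * |z| ^ γ)
        ≤ (4 * Real.pi) ^ (-(1:ℝ)/2) * τ₁ ^ (γ / 2) * mom γ
          + (4 * Real.pi) ^ (-(1:ℝ)/2) * τ₂ ^ (γ / 2) * mom γ := hle
      _ ≤ 4 * (4 * Real.pi) ^ (-(1:ℝ)/2) * mom γ * (τ₂ ^ (-(γ / 2)) * δ ^ γ) := by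
          nlinarith [mul_le_mul_of_nonneg_right (le_trans hm1 hm2)
            (mul_nonneg h4π.le hmomγ),
            mul_le_mul_of_nonneg_right hm2 (mul_nonneg h4π.le hmomγ)]
      _ ≤ (4 * (4 * Real.pi) ^ (-(1:ℝ)/2) * mom γ + (mom γ + mom (γ + 2)))
          * (τ₂ ^ (-(γ / 2)) * δ ^ γ) := by
          nlinarith [mul_pos hP hD]
  · -- case b : 2δ < τ₂, hence τ₂/2 < τ₁
    have hhalf : τ₂ / 2 < τ₁ := by
      have h' : δ = τ₂ - τ₁ := hδdef
      linarith
    set g1 : ℝ → ℝ := fun z => |z| ^ γ * Real.exp (-(z ^ 2) / (4 * τ₂)) with hg1def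
    set g2 : ℝ → ℝ := fun z => |z| ^ (γ + 2) * Real.exp (-(z ^ 2) / (4 * τ₂)) with hg2def
    have hg1 : Integrable g1 := integrable_moment h2 hγ0.le hγ4
    have hg2 : Integrable g2 := integrable_moment h2 (by linarith) (by linarith)
    have hτhalf : τ₂ ≤ 2 * τ₁ := by linarith
    have hle : (∫ z : ℝ, |heatKernel τ₁ z - heatKernel τ₂ z| * |z| ^ γ)
        ≤ ∫ z : ℝ, (δ * τ₂ ^ (-(1:ℝ)/2)) * ((1 / τ₂) * g1 z + (1 / τ₂ ^ 2) * g2 z) := by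
      apply integral_mono_of_nonneg
      · filter_upwards with z; positivity
      · exact ((hg1.const_mul _).add (hg2.const_mul _)).const_mul _
      · filter_upwards with z
        have hd := hk_diff_le h1 h12.le z
        rw [← hδdef] at hd
        rw [abs_sub_comm] at hd
        have hzγ : (0:ℝ) ≤ |z| ^ γ := by positivity
        have hE : (0:ℝ) < Real.exp (-(z ^ 2) / (4 * τ₂)) := Real.exp_pos _
        have hG : (4 * Real.pi * τ₁) ^ (-(1:ℝ)/2) * (1 / (2 * τ₁) + z ^ 2 / (4 * τ₁ ^ 2))
            ≤ τ₂ ^ (-(1:ℝ)/2) * (1 / τ₂ + z ^ 2 / τ₂ ^ 2) := by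
          have e1 : (4 * Real.pi * τ₁) ^ (-(1:ℝ)/2) ≤ τ₂ ^ (-(1:ℝ)/2) := by
            apply Real.rpow_le_rpow_of_nonpos h2 ?_ (by norm_num)
            nlinarith [Real.pi_gt_three]
          have e2 : 1 / (2 * τ₁) ≤ 1 / τ₂ := by
            apply div_le_div_of_nonneg_left (by norm_num) (by positivity)
            linarith
          have e3 : z ^ 2 / (4 * τ₁ ^ 2) ≤ z ^ 2 / τ₂ ^ 2 := by
            apply div_le_div_of_nonneg_left (by positivity) (by positivity)
            nlinarith
          apply mul_le_mul e1 (by linarith) (by positivity) (by positivity)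
        calc |heatKernel τ₁ z - heatKernel τ₂ z| * |z| ^ γ
            ≤ (δ * ((4 * Real.pi * τ₁) ^ (-(1:ℝ)/2) * Real.exp (-(z ^ 2) / (4 * τ₂))
                * (1 / (2 * τ₁) + z ^ 2 / (4 * τ₁ ^ 2)))) * |z| ^ γ :=
              mul_le_mul_of_nonneg_right hd hzγ
          _ = δ * (((4 * Real.pi * τ₁) ^ (-(1:ℝ)/2) * (1 / (2 * τ₁) + z ^ 2 / (4 * τ₁ ^ 2)))
                * (Real.exp (-(z ^ 2) / (4 * τ₂)) * |z| ^ γ)) := by ring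
          _ ≤ δ * ((τ₂ ^ (-(1:ℝ)/2) * (1 / τ₂ + z ^ 2 / τ₂ ^ 2))
                * (Real.exp (-(z ^ 2) / (4 * τ₂)) * |z| ^ γ)) := by
              apply mul_le_mul_of_nonneg_left _ hδ.le
              apply mul_le_mul_of_nonneg_right hG (by positivity)
          _ = (δ * τ₂ ^ (-(1:ℝ)/2)) * ((1 / τ₂) * g1 z + (1 / τ₂ ^ 2) * g2 z) := by
              rw [hg1def, hg2def]
              simp only []
              rw [abs_rpow_add_two γ hγ0 z]
              ring
    rw [integral_const_mul, integral_add (hg1.const_mul _) (hg2.const_mul _),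
      integral_const_mul, integral_const_mul, moment_scale h2, moment_scale h2] at hle
    have hcomb : (δ * τ₂ ^ (-(1:ℝ)/2)) * ((1 / τ₂) * (τ₂ ^ ((γ + 1) / 2) * mom γ)
          + (1 / τ₂ ^ 2) * (τ₂ ^ ((γ + 2 + 1) / 2) * mom (γ + 2)))
        = δ * (τ₂ ^ (γ / 2 - 1) * (mom γ + mom (γ + 2))) := by
      have i1 : 1 / τ₂ = τ₂ ^ (-(1:ℝ)) := by
        rw [Real.rpow_neg_one, one_div]
      have i2 : 1 / τ₂ ^ 2 = τ₂ ^ (-(2:ℝ)) := by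
        rw [show (-(2:ℝ)) = -((2:ℕ):ℝ) by norm_num, Real.rpow_neg h2.le,
          Real.rpow_natCast, one_div]
      have c1 : τ₂ ^ (-(1:ℝ)/2) * (τ₂ ^ (-(1:ℝ)) * τ₂ ^ ((γ + 1) / 2)) = τ₂ ^ (γ / 2 - 1) := by
        rw [← Real.rpow_add h2, ← Real.rpow_add h2]; congr 1; ring
      have c2 : τ₂ ^ (-(1:ℝ)/2) * (τ₂ ^ (-(2:ℝ)) * τ₂ ^ ((γ + 2 + 1) / 2)) = τ₂ ^ (γ / 2 - 1) := by
        rw [← Real.rpow_add h2, ← Real.rpow_add h2]; congr 1; ring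
      rw [i1, i2]
      linear_combination (δ * mom γ) * c1 + (δ * mom (γ + 2)) * c2
    rw [hcomb] at hle
    have hfin : δ * τ₂ ^ (γ / 2 - 1) ≤ δ ^ γ * τ₂ ^ (-(γ / 2)) := by
      have hsplit : δ ^ γ * δ ^ (1 - γ) = δ := by
        rw [← Real.rpow_add hδ]; norm_num
      have h1γ : δ ^ (1 - γ) ≤ τ₂ ^ (1 - γ) := Real.rpow_le_rpow hδ.le hδτ (by linarith)
      have hτc : τ₂ ^ (1 - γ) * τ₂ ^ (γ / 2 - 1) = τ₂ ^ (-(γ / 2)) := by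
        rw [← Real.rpow_add h2]; congr 1; ring
      have hτnn : (0:ℝ) ≤ τ₂ ^ (γ / 2 - 1) := (Real.rpow_pos_of_pos h2 _).le
      calc δ * τ₂ ^ (γ / 2 - 1) = δ ^ γ * (δ ^ (1 - γ) * τ₂ ^ (γ / 2 - 1)) :=
            (by rw [← mul_assoc, hsplit] :
              δ ^ γ * (δ ^ (1 - γ) * τ₂ ^ (γ / 2 - 1)) = δ * τ₂ ^ (γ / 2 - 1)).symm
        _ ≤ δ ^ γ * (τ₂ ^ (1 - γ) * τ₂ ^ (γ / 2 - 1)) := by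
            apply mul_le_mul_of_nonneg_left _ hD.le
            exact mul_le_mul_of_nonneg_right h1γ hτnn
        _ = δ ^ γ * τ₂ ^ (-(γ / 2)) := by rw [hτc]
    have hmomsum : (0:ℝ) ≤ mom γ + mom (γ + 2) := by linarith
    calc (∫ z : ℝ, |heatKernel τ₁ z - heatKernel τ₂ z| * |z| ^ γ)
        ≤ δ * (τ₂ ^ (γ / 2 - 1) * (mom γ + mom (γ + 2))) := hle
      _ = (δ * τ₂ ^ (γ / 2 - 1)) * (mom γ + mom (γ + 2)) := by ring
      _ ≤ (δ ^ γ * τ₂ ^ (-(γ / 2))) * (mom γ + mom (γ + 2)) := by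
          exact mul_le_mul_of_nonneg_right hfin hmomsum
      _ ≤ (4 * (4 * Real.pi) ^ (-(1:ℝ)/2) * mom γ + (mom γ + mom (γ + 2)))
          * (τ₂ ^ (-(γ / 2)) * δ ^ γ) := by
          have hQ : (0:ℝ) ≤ 4 * (4 * Real.pi) ^ (-(1:ℝ)/2) * mom γ
              * (τ₂ ^ (-(γ / 2)) * δ ^ γ) := by positivity
          have hrw : (4 * (4 * Real.pi) ^ (-(1:ℝ)/2) * mom γ + (mom γ + mom (γ + 2)))
              * (τ₂ ^ (-(γ / 2)) * δ ^ γ)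
              = 4 * (4 * Real.pi) ^ (-(1:ℝ)/2) * mom γ * (τ₂ ^ (-(γ / 2)) * δ ^ γ)
                + (δ ^ γ * τ₂ ^ (-(γ / 2))) * (mom γ + mom (γ + 2)) := by ring
          rw [hrw]
          linarith [hQ]

end HeatProofAux

/-- Hölder-type estimate in time for `f(s) = ∫ ρ(t-s, x-y) σ(s,y) dy`. -/
theorem heat_convolution_time_increment_bound
    (σ : ℝ → ℝ → ℝ) (γ L M : ℝ) (hγ : γ ∈ Ioc (0:ℝ) 1) (hL : 0 < L)
    (hbdd : ∀ s y, 0 ≤ s → |σ s y| ≤ M)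
    (hHolder : ∀ t₁ t₂ x₁ x₂ : ℝ, 0 ≤ t₁ → 0 ≤ t₂ →
      |σ t₁ x₁ - σ t₂ x₂| ≤ L * (|t₁ - t₂| ^ γ + |x₁ - x₂| ^ γ))
    (t x : ℝ) (ht : 0 < t) :
    ∃ C > 0, ∀ u s : ℝ, 0 ≤ u → u < s → s < t →
      |(∫ y, heatKernel (t - s) (x - y) * σ s y)
          - (∫ y, heatKernel (t - u) (x - y) * σ u y)|
        ≤ C * (t - u) ^ (-(γ / 2)) * (s - u) ^ γ := by
  open HeatProofAux in
  obtain ⟨hγ0, hγ1⟩ := hγ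
  obtain ⟨CK, hCK⟩ : ∃ c : ℝ, c = 4 * (4 * Real.pi) ^ (-(1:ℝ)/2) * HeatProofAux.mom γ
      + (HeatProofAux.mom γ + HeatProofAux.mom (γ + 2)) := ⟨_, rfl⟩
  have h4π : (0:ℝ) < (4 * Real.pi) ^ (-(1:ℝ)/2) := Real.rpow_pos_of_pos (by positivity) _
  have hmomγ := HeatProofAux.mom_nonneg γ
  have hmomγ2 := HeatProofAux.mom_nonneg (γ + 2)
  have hCK0 : 0 ≤ CK := by
    rw [hCK]
    have : (0:ℝ) ≤ 4 * (4 * Real.pi) ^ (-(1:ℝ)/2) * HeatProofAux.mom γ := by positivity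
    linarith
  have htγ : (0:ℝ) < t ^ (γ / 2) := Real.rpow_pos_of_pos ht _
  refine ⟨L * (t ^ (γ / 2) + CK), mul_pos hL (by linarith), ?_⟩
  intro u s hu hus hst
  have hs0 : (0:ℝ) ≤ s := le_trans hu hus.le
  have hτ1 : 0 < t - s := by linarith
  have hτ2 : 0 < t - u := by linarith
  have h12 : t - s < t - u := by linarith
  have hδ : 0 < s - u := by linarith
  -- continuity of σ r in the space variable
  have hσcont : ∀ r : ℝ, 0 ≤ r → Continuous (fun y => σ r y) := by
    intro r hr
    rw [continuous_iff_continuousAt]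
    intro y₀
    have hten : Filter.Tendsto (fun y => σ r y - σ r y₀) (nhds y₀) (nhds 0) := by
      apply squeeze_zero_norm (a := fun y => L * |y - y₀| ^ γ)
      · intro y
        have h0 := hHolder r r y y₀ hr hr
        rw [sub_self, abs_zero, Real.zero_rpow (ne_of_gt hγ0), zero_add] at h0
        simpa using h0
      · have hc : Filter.Tendsto (fun y : ℝ => |y - y₀|) (nhds y₀) (nhds 0) := by
          have hcont : Continuous fun y : ℝ => |y - y₀| := by fun_prop
          have := hcont.tendsto y₀
          simpa using this
        have hr2 : ContinuousAt (fun d : ℝ => d ^ γ) 0 :=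
          Real.continuousAt_rpow_const 0 γ (Or.inr hγ0.le)
        have := (hr2.tendsto.comp hc).const_mul L
        simpa [Real.zero_rpow (ne_of_gt hγ0)] using this
    have hfin : Filter.Tendsto (fun y => σ r y) (nhds y₀) (nhds (σ r y₀)) := by
      have := hten.add_const (σ r y₀)
      simpa using this
    exact hfin
  -- integrability facts
  have hkint : ∀ τ : ℝ, 0 < τ → Integrable (fun y => heatKernel τ (x - y)) :=
    fun τ hτ => (integrable_comp_sub_left (heatKernel τ) x).2 (HeatProofAux.integrable_hk hτ)
  have hprod : ∀ τ r : ℝ, 0 < τ → 0 ≤ r →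
      Integrable (fun y => heatKernel τ (x - y) * σ r y) := by
    intro τ r hτ hr
    have := (hkint τ hτ).bdd_mul ((hσcont r hr).aestronglyMeasurable)
      (Filter.Eventually.of_forall fun y => by rw [Real.norm_eq_abs]; exact hbdd r y hr)
    simpa [mul_comm] using this
  have hJint : ∀ τ : ℝ, 0 < τ →
      Integrable (fun y => heatKernel τ (x - y) * (σ u y - σ u x)) := by
    intro τ hτ
    have := (hprod τ u hτ hu).sub ((hkint τ hτ).mul_const (σ u x))
    exact this.congr (Filter.Eventually.of_forall fun y => by simp only [Pi.sub_apply]; ring)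
  -- decomposition
  have hb : ∀ τ : ℝ, 0 < τ → (∫ y, heatKernel τ (x - y) * σ u y)
      = (∫ y, heatKernel τ (x - y) * (σ u y - σ u x)) + σ u x := by
    intro τ hτ
    have e : (fun y => heatKernel τ (x - y) * (σ u y - σ u x))
        = fun y => heatKernel τ (x - y) * σ u y - heatKernel τ (x - y) * σ u x :=
      funext fun y => by ring
    rw [e, integral_sub (hprod τ u hτ hu) ((hkint τ hτ).mul_const _),
      integral_mul_const, HeatProofAux.integral_hk_sub hτ x, one_mul]
    ring
  have ha : (∫ y, heatKernel (t - s) (x - y) * (σ s y - σ u y))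
      = (∫ y, heatKernel (t - s) (x - y) * σ s y)
        - (∫ y, heatKernel (t - s) (x - y) * σ u y) := by
    have e : (fun y => heatKernel (t - s) (x - y) * (σ s y - σ u y))
        = fun y => heatKernel (t - s) (x - y) * σ s y
            - heatKernel (t - s) (x - y) * σ u y := funext fun y => by ring
    rw [e, integral_sub (hprod _ s hτ1 hs0) (hprod _ u hτ1 hu)]
  have hI2eq : (∫ y, (heatKernel (t - s) (x - y) - heatKernel (t - u) (x - y))
        * (σ u y - σ u x))
      = (∫ y, heatKernel (t - s) (x - y) * (σ u y - σ u x))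
        - (∫ y, heatKernel (t - u) (x - y) * (σ u y - σ u x)) := by
    have e : (fun y => (heatKernel (t - s) (x - y) - heatKernel (t - u) (x - y))
          * (σ u y - σ u x))
        = fun y => heatKernel (t - s) (x - y) * (σ u y - σ u x)
            - heatKernel (t - u) (x - y) * (σ u y - σ u x) := funext fun y => by ring
    rw [e, integral_sub (hJint _ hτ1) (hJint _ hτ2)]
  have hsplit : (∫ y, heatKernel (t - s) (x - y) * σ s y)
        - (∫ y, heatKernel (t - u) (x - y) * σ u y)
      = (∫ y, heatKernel (t - s) (x - y) * (σ s y - σ u y))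
        + (∫ y, (heatKernel (t - s) (x - y) - heatKernel (t - u) (x - y))
            * (σ u y - σ u x)) := by
    rw [ha, hI2eq, hb _ hτ1, hb _ hτ2]
    ring
  -- bound the first term
  have hI1b : |∫ y, heatKernel (t - s) (x - y) * (σ s y - σ u y)|
      ≤ (L * t ^ (γ / 2)) * ((t - u) ^ (-(γ / 2)) * (s - u) ^ γ) := by
    have hpt : ∀ᵐ y : ℝ, ‖heatKernel (t - s) (x - y) * (σ s y - σ u y)‖
        ≤ heatKernel (t - s) (x - y) * (L * (s - u) ^ γ) := by
      filter_upwards with y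
      rw [norm_mul, Real.norm_eq_abs, Real.norm_eq_abs,
        abs_of_nonneg (HeatProofAux.hk_pos hτ1 _).le]
      apply mul_le_mul_of_nonneg_left _ (HeatProofAux.hk_pos hτ1 _).le
      have h0 := hHolder s u y y hs0 hu
      rw [sub_self, abs_zero, Real.zero_rpow (ne_of_gt hγ0), add_zero,
        abs_of_pos hδ] at h0
      exact h0
    have hbnd := norm_integral_le_of_norm_le ((hkint _ hτ1).mul_const (L * (s - u) ^ γ)) hpt
    rw [integral_mul_const, HeatProofAux.integral_hk_sub hτ1 x, one_mul,
      Real.norm_eq_abs] at hbnd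
    have hone : (1:ℝ) ≤ t ^ (γ / 2) * (t - u) ^ (-(γ / 2)) := by
      have hm : (t - u) ^ (γ / 2) ≤ t ^ (γ / 2) :=
        Real.rpow_le_rpow hτ2.le (by linarith) (by positivity)
      have hval : (t - u) ^ (γ / 2) * (t - u) ^ (-(γ / 2)) = 1 := by
        rw [← Real.rpow_add hτ2]; norm_num
      calc (1:ℝ) = (t - u) ^ (γ / 2) * (t - u) ^ (-(γ / 2)) := hval.symm
        _ ≤ t ^ (γ / 2) * (t - u) ^ (-(γ / 2)) :=
            mul_le_mul_of_nonneg_right hm (Real.rpow_pos_of_pos hτ2 _).le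
    calc |∫ y, heatKernel (t - s) (x - y) * (σ s y - σ u y)|
        ≤ L * (s - u) ^ γ := hbnd
      _ = (L * (s - u) ^ γ) * 1 := by ring
      _ ≤ (L * (s - u) ^ γ) * (t ^ (γ / 2) * (t - u) ^ (-(γ / 2))) := by
          apply mul_le_mul_of_nonneg_left hone
          have : (0:ℝ) < (s - u) ^ γ := Real.rpow_pos_of_pos hδ _
          positivity
      _ = (L * t ^ (γ / 2)) * ((t - u) ^ (-(γ / 2)) * (s - u) ^ γ) := by ring
  -- bound the second term
  have hI2b : |∫ y, (heatKernel (t - s) (x - y) - heatKernel (t - u) (x - y))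
        * (σ u y - σ u x)|
      ≤ (L * CK) * ((t - u) ^ (-(γ / 2)) * (s - u) ^ γ) := by
    set h : ℝ → ℝ := fun z => |heatKernel (t - s) z - heatKernel (t - u) z| * |z| ^ γ with hh
    have hγ4 : γ ≤ 4 := by linarith
    have hhint : Integrable h := by
      refine ((HeatProofAux.integrable_hk_moment hτ1 hγ0.le hγ4).add
        (HeatProofAux.integrable_hk_moment hτ2 hγ0.le hγ4)).mono' ?_ ?_
      · apply Continuous.aestronglyMeasurable
        exact ((HeatProofAux.hk_continuous.sub HeatProofAux.hk_continuous).abs.mul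
          (continuous_abs.rpow_const fun _ => Or.inr hγ0.le))
      · filter_upwards with z
        have e1 := abs_sub (heatKernel (t - s) z) (heatKernel (t - u) z)
        rw [abs_of_nonneg (HeatProofAux.hk_pos hτ1 z).le,
          abs_of_nonneg (HeatProofAux.hk_pos hτ2 z).le] at e1
        have hz : (0:ℝ) ≤ |z| ^ γ := by positivity
        have : ‖h z‖ = h z := by
          rw [hh]; simp only []
          rw [Real.norm_eq_abs, abs_of_nonneg (by positivity)]
        rw [this, hh]
        simp only []
        calc |heatKernel (t - s) z - heatKernel (t - u) z| * |z| ^ γ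
            ≤ (heatKernel (t - s) z + heatKernel (t - u) z) * |z| ^ γ :=
              mul_le_mul_of_nonneg_right e1 hz
          _ = heatKernel (t - s) z * |z| ^ γ + heatKernel (t - u) z * |z| ^ γ := by ring
    have hcompint : Integrable (fun y => L * h (x - y)) :=
      (((integrable_comp_sub_left h x).2 hhint).const_mul L)
    have hpt : ∀ᵐ y : ℝ, ‖(heatKernel (t - s) (x - y) - heatKernel (t - u) (x - y))
        * (σ u y - σ u x)‖ ≤ L * h (x - y) := by
      filter_upwards with y
      rw [norm_mul, Real.norm_eq_abs, Real.norm_eq_abs]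
      have hσb : |σ u y - σ u x| ≤ L * |x - y| ^ γ := by
        have h0 := hHolder u u y x hu hu
        rw [sub_self, abs_zero, Real.zero_rpow (ne_of_gt hγ0), zero_add,
          abs_sub_comm y x] at h0
        exact h0
      calc |heatKernel (t - s) (x - y) - heatKernel (t - u) (x - y)| * |σ u y - σ u x|
          ≤ |heatKernel (t - s) (x - y) - heatKernel (t - u) (x - y)|
            * (L * |x - y| ^ γ) := mul_le_mul_of_nonneg_left hσb (abs_nonneg _)
        _ = L * h (x - y) := by rw [hh]; simp only []; ring
    have hbnd := norm_integral_le_of_norm_le hcompint hpt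
    rw [Real.norm_eq_abs, integral_const_mul,
      integral_sub_left_eq_self h volume x] at hbnd
    have hkd := HeatProofAux.kernel_diff_moment hτ1 h12 hγ0 hγ1
    rw [show t - u - (t - s) = s - u by ring] at hkd
    calc |∫ y, (heatKernel (t - s) (x - y) - heatKernel (t - u) (x - y))
          * (σ u y - σ u x)|
        ≤ L * ∫ z, h z := hbnd
      _ ≤ L * (CK * ((t - u) ^ (-(γ / 2)) * (s - u) ^ γ)) := by
          apply mul_le_mul_of_nonneg_left _ hL.le
          rw [hCK]
          exact hkd
      _ = (L * CK) * ((t - u) ^ (-(γ / 2)) * (s - u) ^ γ) := by ring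
  rw [hsplit]
  calc |(∫ y, heatKernel (t - s) (x - y) * (σ s y - σ u y))
        + (∫ y, (heatKernel (t - s) (x - y) - heatKernel (t - u) (x - y))
            * (σ u y - σ u x))|
      ≤ |∫ y, heatKernel (t - s) (x - y) * (σ s y - σ u y)|
        + |∫ y, (heatKernel (t - s) (x - y) - heatKernel (t - u) (x - y))
            * (σ u y - σ u x)| := abs_add_le _ _
    _ ≤ (L * t ^ (γ / 2)) * ((t - u) ^ (-(γ / 2)) * (s - u) ^ γ)
        + (L * CK) * ((t - u) ^ (-(γ / 2)) * (s - u) ^ γ) := add_le_add hI1b hI2b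
    _ = L * (t ^ (γ / 2) + CK) * (t - u) ^ (-(γ / 2)) * (s - u) ^ γ := by ring
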